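/- Let A be a finite dimensional k-algebra and α : A⊗A → A* a Hochschild 2-cocycle. Suppose there exist c ∈ Z(A) ∩ U(A) and h ∈ A* with α(a⊗b)(c) − α(b⊗a)(c) + h(ab−ba) = 0 for all a,b ∈ A. Then, setting h' := h − α(1⊗1)·c, the pair (i_c*(α̃), h') is a cyclic 2-cocycle, i.e., b₃*(i_c*(α̃)) = 0 and B₁*(i_c*(α̃)) + b₁*(h') = 0. -/

import Mathlib

open TensorProduct

namespace HochschildScaffold

variable (k : Type*) [Field k] (A : Type*) [Ring A] [Algebra k A]

/-- `Tp k A n` is the `n`-fold tensor power `A^{⊗n}` over `k`. -/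
abbrev Tp (n : ℕ) : Type _ := ⨂[k] (_ : Fin n), A

/-- `A^{⊗1} ≃ A`. -/
noncomputable def single : Tp k A 1 ≃ₗ[k] A :=
  PiTensorProduct.subsingletonEquiv (0 : Fin 1)

/-- Attach a tensor factor at the front: `A ⊗ A^{⊗n} ≃ A^{⊗(n+1)}`. -/
noncomputable def toFront (n : ℕ) : (A ⊗[k] Tp k A n) ≃ₗ[k] Tp k A (n + 1) :=
  (TensorProduct.congr (single k A).symm (LinearEquiv.refl k (Tp k A n))) ≪≫ₗ
    (PiTensorProduct.tmulEquiv k A) ≪≫ₗ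
      (PiTensorProduct.reindex k (fun _ => A)
        ((finSumFinEquiv : Fin 1 ⊕ Fin n ≃ Fin (1 + n)).trans (finCongr (Nat.add_comm 1 n))))

/-- Attach a tensor factor at the back: `A^{⊗n} ⊗ A ≃ A^{⊗(n+1)}`. -/
noncomputable def toBack (n : ℕ) : (Tp k A n ⊗[k] A) ≃ₗ[k] Tp k A (n + 1) :=
  (TensorProduct.congr (LinearEquiv.refl k (Tp k A n)) (single k A).symm) ≪≫ₗ
    (PiTensorProduct.tmulEquiv k A) ≪≫ₗ
      (PiTensorProduct.reindex k (fun _ => A) (finSumFinEquiv : Fin n ⊕ Fin 1 ≃ Fin (n + 1)))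

/-- Multiply the first two tensor factors: `a₀ ⊗ a₁ ⊗ ⋯ ↦ (a₀a₁) ⊗ ⋯`. -/
noncomputable def mulFront (n : ℕ) : Tp k A (n + 2) →ₗ[k] Tp k A (n + 1) :=
  (toFront k A n).toLinearMap ∘ₗ
    (LinearMap.rTensor (Tp k A n) (LinearMap.mul' k A)) ∘ₗ
      (TensorProduct.assoc k A A (Tp k A n)).symm.toLinearMap ∘ₗ
        (LinearMap.lTensor A (toFront k A n).symm.toLinearMap) ∘ₗ
          (toFront k A (n + 1)).symm.toLinearMap

/-- Cyclic rotation `(a₀,…,a_{n-1}) ↦ (a_{n-1}, a₀, …, a_{n-2})` on `A^{⊗n}`. -/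
noncomputable def rotR (n : ℕ) : Tp k A n ≃ₗ[k] Tp k A n :=
  PiTensorProduct.reindex k (fun _ => A) (finRotate n)

/-- The `j`-th (non-cyclic) face map `A^{⊗(m+1)} → A^{⊗m}`, multiplying the
`j`-th and `(j+1)`-st tensor factors: `a₀⊗⋯⊗aₘ ↦ a₀⊗⋯⊗aⱼaⱼ₊₁⊗⋯⊗aₘ`. -/
noncomputable def nface : (m : ℕ) → Fin m → (Tp k A (m + 1) →ₗ[k] Tp k A m)
  | m + 1, j =>
      (PiTensorProduct.reindex k (fun _ => A) ((finRotate (m + 1)) ^ (j : ℕ))).toLinearMap ∘ₗ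
        (mulFront k A m) ∘ₗ
          (PiTensorProduct.reindex k (fun _ => A) (((finRotate (m + 2)) ^ (j : ℕ))⁻¹)).toLinearMap

/-- The Hochschild boundary `b_{n+1} : A^{⊗(n+2)} → A^{⊗(n+1)}`, i.e.
`b(a₀⊗⋯⊗a_{n+1}) = Σ_{i=0}^{n} (-1)^i a₀⊗⋯⊗aᵢaᵢ₊₁⊗⋯⊗a_{n+1}
  + (-1)^{n+1} a_{n+1}a₀⊗a₁⊗⋯⊗aₙ`. -/
noncomputable def hb (n : ℕ) : Tp k A (n + 2) →ₗ[k] Tp k A (n + 1) :=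
  (∑ i : Fin (n + 1), ((-1 : k) ^ (i : ℕ)) • nface k A (n + 1) i)
    + ((-1 : k) ^ (n + 1)) • (mulFront k A n ∘ₗ (rotR k A (n + 2)).toLinearMap)

/-- Insert a `1` in front: `a₀⊗⋯⊗a_{n-1} ↦ 1⊗a₀⊗⋯⊗a_{n-1}`. -/
noncomputable def ins0 (n : ℕ) : Tp k A n →ₗ[k] Tp k A (n + 1) :=
  (toFront k A n).toLinearMap ∘ₗ (TensorProduct.mk k A (Tp k A n) 1)

/-- Insert a `1` in the second slot: `a₀⊗a₁⊗⋯ ↦ a₀⊗1⊗a₁⊗⋯`. -/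
noncomputable def ins1 (n : ℕ) : Tp k A (n + 1) →ₗ[k] Tp k A (n + 2) :=
  (rotR k A (n + 2)).toLinearMap ∘ₗ (ins0 k A (n + 1)) ∘ₗ (rotR k A (n + 1)).symm.toLinearMap

/-- The Connes boundary operator `B_n : A^{⊗(n+1)} → A^{⊗(n+2)}`, i.e.
`B(a₀⊗⋯⊗aₙ) = Σ_{i=0}^n (-1)^{ni} (1⊗aᵢ⊗⋯⊗aₙ⊗a₀⊗⋯⊗aᵢ₋₁ − aᵢ⊗1⊗aᵢ₊₁⊗⋯⊗aₙ⊗a₀⊗⋯⊗aᵢ₋₁)`. -/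
noncomputable def hB (n : ℕ) : Tp k A (n + 1) →ₗ[k] Tp k A (n + 2) :=
  ∑ i : Fin (n + 1), ((-1 : k) ^ (n * (i : ℕ))) •
    ((ins0 k A (n + 1) - ins1 k A n) ∘ₗ
      (PiTensorProduct.reindex k (fun _ => A) (((finRotate (n + 1)) ^ (i : ℕ))⁻¹)).toLinearMap)

/-- Contraction by a degree-0 cochain `c ∈ A`:
`i_c(a₀⊗a₁⊗⋯⊗aₙ) = a₀c⊗a₁⊗⋯⊗aₙ`. -/
noncomputable def iC (c : A) (n : ℕ) : Tp k A (n + 1) →ₗ[k] Tp k A (n + 1) :=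
  (toFront k A n).toLinearMap ∘ₗ
    (LinearMap.rTensor (Tp k A n) (LinearMap.mulRight k c)) ∘ₗ
      (toFront k A n).symm.toLinearMap

/-- Split in the middle: `A^{⊗(m+n)} ≃ A^{⊗m} ⊗ A^{⊗n}`. -/
noncomputable def splitMid (m n : ℕ) : Tp k A (m + n) ≃ₗ[k] (Tp k A m ⊗[k] Tp k A n) :=
  (PiTensorProduct.reindex k (fun _ => A)
      (finSumFinEquiv : Fin m ⊕ Fin n ≃ Fin (m + n)).symm) ≪≫ₗ
    (PiTensorProduct.tmulEquiv k A).symm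

/-- Contraction by an `m`-cochain `β : A^{⊗m} → A`:
`i_β(a₀⊗a₁⊗⋯⊗aₙ) = (a₀·β(a₁⊗⋯⊗aₘ)) ⊗ a_{m+1} ⊗ ⋯ ⊗ aₙ`. -/
noncomputable def iContr {m : ℕ} (β : Tp k A m →ₗ[k] A) (n : ℕ) :
    Tp k A (m + n + 1) →ₗ[k] Tp k A (n + 1) :=
  (toFront k A n).toLinearMap ∘ₗ
    (LinearMap.rTensor (Tp k A n) (LinearMap.mul' k A)) ∘ₗ
      (TensorProduct.assoc k A A (Tp k A n)).symm.toLinearMap ∘ₗ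
        (LinearMap.lTensor A
          ((LinearMap.rTensor (Tp k A n) β) ∘ₗ (splitMid k A m n).toLinearMap)) ∘ₗ
          (toFront k A (m + n)).symm.toLinearMap

/-- The Hochschild coboundary `δ^m : Hom(A^{⊗m}, A) → Hom(A^{⊗(m+1)}, A)`:
`(δβ)(a₁⊗⋯⊗a_{m+1}) = a₁β(a₂⊗⋯) + Σ_{i=1}^m (-1)^i β(⋯⊗aᵢaᵢ₊₁⊗⋯)
  + (-1)^{m+1} β(a₁⊗⋯⊗aₘ)a_{m+1}`. -/
noncomputable def hdelta (m : ℕ) (β : Tp k A m →ₗ[k] A) : Tp k A (m + 1) →ₗ[k] A :=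
  (TensorProduct.lift ((LinearMap.mul k A).compl₂ β) ∘ₗ (toFront k A m).symm.toLinearMap)
    + ∑ j : Fin m, ((-1 : k) ^ ((j : ℕ) + 1)) • (β ∘ₗ nface k A m j)
    + ((-1 : k) ^ (m + 1)) •
        (TensorProduct.lift ((LinearMap.mul k A) ∘ₗ β) ∘ₗ (toBack k A m).symm.toLinearMap)

/-- Left action of `A` on `A* = Hom_k(A,k)`: `(a·g)(x) = g(xa)`. -/
noncomputable def la : A →ₗ[k] Module.Dual k A →ₗ[k] Module.Dual k A :=
  LinearMap.mk₂ k (fun a g => g ∘ₗ LinearMap.mulRight k a)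
    (by intro a a' g; ext x; simp [mul_add])
    (by intro c a g; ext x; simp)
    (by intro a g g'; ext x; simp)
    (by intro c a g; ext x; simp)

/-- Right action of `A` on `A* = Hom_k(A,k)`: `(f·b)(x) = f(bx)`. -/
noncomputable def ra : Module.Dual k A →ₗ[k] A →ₗ[k] Module.Dual k A :=
  LinearMap.mk₂ k (fun g b => g ∘ₗ LinearMap.mulLeft k b)
    (by intro g g' b; ext x; simp)
    (by intro c g b; ext x; simp)
    (by intro g b b'; ext x; simp [add_mul])
    (by intro c g b; ext x; simp)

/-- The Hochschild coboundary `δ^m : Hom(A^{⊗m}, A^*) → Hom(A^{⊗(m+1)}, A^*)`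
for cochains with values in the dual bimodule `A^*`. -/
noncomputable def hdeltaD (m : ℕ) (β : Tp k A m →ₗ[k] Module.Dual k A) :
    Tp k A (m + 1) →ₗ[k] Module.Dual k A :=
  (TensorProduct.lift ((la k A).compl₂ β) ∘ₗ (toFront k A m).symm.toLinearMap)
    + ∑ j : Fin m, ((-1 : k) ^ ((j : ℕ) + 1)) • (β ∘ₗ nface k A m j)
    + ((-1 : k) ^ (m + 1)) •
        (TensorProduct.lift ((ra k A) ∘ₗ β) ∘ₗ (toBack k A m).symm.toLinearMap)

/-- The canonical adjunction `(A^{⊗(n+1)})^* → Hom_k(A^{⊗n}, A^*)`,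
`φ ↦ ((a₁⊗⋯⊗aₙ) ↦ (a₀ ↦ φ(a₀⊗a₁⊗⋯⊗aₙ)))`. -/
noncomputable def adj (n : ℕ) (φ : Module.Dual k (Tp k A (n + 1))) :
    Tp k A n →ₗ[k] Module.Dual k A :=
  (TensorProduct.curry (φ ∘ₗ (toFront k A n).toLinearMap)).flip

/-- `A^{⊗3} ≃ A ⊗ (A ⊗ A)`. -/
noncomputable def triple : Tp k A 3 ≃ₗ[k] (A ⊗[k] (A ⊗[k] A)) :=
  (toFront k A 2).symm ≪≫ₗ
    TensorProduct.congr (LinearEquiv.refl k A)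
      ((toFront k A 1).symm ≪≫ₗ TensorProduct.congr (LinearEquiv.refl k A) (single k A))

/-- The adjoint `α̃ ∈ (A^{⊗3})^*` of a 2-cochain `α : A ⊗ A → A^*`,
`α̃(a⊗b⊗d) := α(b⊗d)(a)`. -/
noncomputable def adjCochain (α : A →ₗ[k] A →ₗ[k] Module.Dual k A) :
    Module.Dual k (Tp k A 3) :=
  (TensorProduct.lift
      ((TensorProduct.lift.equiv (RingHom.id k) A A k).toLinearMap ∘ₗ (LinearMap.lflip.toLinearMap ∘ₗ α).flip)) ∘ₗ
    (triple k A).toLinearMap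

set_option linter.unusedSectionVars false

lemma single_tprod (f : Fin 1 → A) : single k A (PiTensorProduct.tprod k f) = f 0 := by
  simp [single]

lemma single_symm (a : A) : (single k A).symm a = PiTensorProduct.tprod k (fun _ => a) := by
  rw [LinearEquiv.symm_apply_eq, single_tprod]

lemma toFront_tmul (n : ℕ) (a : A) (f : Fin n → A) :
    toFront k A n (a ⊗ₜ[k] PiTensorProduct.tprod k f)
      = PiTensorProduct.tprod k (Fin.cons a f) := by
  simp only [toFront, LinearEquiv.trans_apply, TensorProduct.congr_tmul, LinearEquiv.refl_apply,
    single_symm]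
  rw [PiTensorProduct.tmulEquiv_apply, PiTensorProduct.reindex_tprod]
  congr 1
  funext i
  simp only [Equiv.symm_trans_apply, finCongr_symm, finCongr_apply]
  rcases Fin.eq_zero_or_eq_succ i with h | ⟨j, rfl⟩
  · subst h
    rw [show ((0 : Fin (n+1)).cast (Nat.add_comm 1 n).symm) = Fin.castAdd n 0 from rfl,
      finSumFinEquiv_symm_apply_castAdd]
    simp
  · rw [show (Fin.cast (Nat.add_comm 1 n).symm j.succ) = Fin.natAdd 1 j from by
      ext; simp [Nat.add_comm], finSumFinEquiv_symm_apply_natAdd]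
    simp

lemma toFront_symm (n : ℕ) (a : A) (f : Fin n → A) :
    (toFront k A n).symm (PiTensorProduct.tprod k (Fin.cons a f))
      = a ⊗ₜ[k] PiTensorProduct.tprod k f := by
  rw [LinearEquiv.symm_apply_eq, toFront_tmul]

lemma toBack_tmul (n : ℕ) (f : Fin n → A) (a : A) :
    toBack k A n (PiTensorProduct.tprod k f ⊗ₜ[k] a)
      = PiTensorProduct.tprod k (Fin.snoc f a) := by
  simp only [toBack, LinearEquiv.trans_apply, TensorProduct.congr_tmul, LinearEquiv.refl_apply,
    single_symm]
  rw [PiTensorProduct.tmulEquiv_apply, PiTensorProduct.reindex_tprod]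
  congr 1
  funext i
  induction i using Fin.lastCases with
  | last =>
    rw [show (Fin.last n) = Fin.natAdd n 0 from by ext; simp,
      finSumFinEquiv_symm_apply_natAdd]
    simp [Fin.snoc]
  | cast j =>
    rw [show (Fin.castSucc j) = Fin.castAdd 1 j from rfl, finSumFinEquiv_symm_apply_castAdd]
    simp [show Fin.castAdd 1 j = Fin.castSucc j from rfl]

lemma toBack_symm (n : ℕ) (f : Fin n → A) (a : A) :
    (toBack k A n).symm (PiTensorProduct.tprod k (Fin.snoc f a))
      = PiTensorProduct.tprod k f ⊗ₜ[k] a := by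
  rw [LinearEquiv.symm_apply_eq, toBack_tmul]

lemma mulFront_tprod (n : ℕ) (a b : A) (f : Fin n → A) :
    mulFront k A n (PiTensorProduct.tprod k (Fin.cons a (Fin.cons b f)))
      = PiTensorProduct.tprod k (Fin.cons (a * b) f) := by
  simp only [mulFront, LinearMap.coe_comp, Function.comp_apply, LinearEquiv.coe_coe]
  rw [toFront_symm]
  simp only [LinearMap.lTensor_tmul, LinearEquiv.coe_coe, toFront_symm,
    TensorProduct.assoc_symm_tmul, LinearMap.rTensor_tmul, LinearMap.mul'_apply, toFront_tmul]

lemma rotR_tprod (n : ℕ) (f : Fin n → A) :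
    rotR k A n (PiTensorProduct.tprod k f)
      = PiTensorProduct.tprod k (fun i => f ((finRotate n).symm i)) := by
  simp only [rotR, PiTensorProduct.reindex_tprod]

lemma tprod_cons3 (a b d : A) :
    PiTensorProduct.tprod k ![a, b, d] = PiTensorProduct.tprod k (Fin.cons a ![b, d]) := rfl

lemma iC_tprod (c a b d : A) :
    iC k A c 2 (PiTensorProduct.tprod k ![a, b, d])
      = PiTensorProduct.tprod k ![a * c, b, d] := by
  rw [tprod_cons3]
  simp only [iC, LinearMap.coe_comp, Function.comp_apply, LinearEquiv.coe_coe, toFront_symm,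
    LinearMap.rTensor_tmul, LinearMap.mulRight_apply, toFront_tmul]
  rfl

lemma adjCochain_tprod (α : A →ₗ[k] A →ₗ[k] Module.Dual k A) (a b d : A) :
    adjCochain k A α (PiTensorProduct.tprod k ![a, b, d]) = α b d a := by
  rw [tprod_cons3]
  simp only [adjCochain, triple, LinearMap.coe_comp, Function.comp_apply, LinearEquiv.coe_coe,
    LinearEquiv.trans_apply, toFront_symm, TensorProduct.congr_tmul, LinearEquiv.refl_apply]
  rw [show (![b, d] : Fin 2 → A) = Fin.cons b (fun _ : Fin 1 => d) from by
    funext i; fin_cases i <;> rfl]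
  rw [toFront_symm]
  simp [single_tprod]

lemma vec4_cons (a b d e : A) : (![a,b,d,e] : Fin 4 → A) = Fin.cons a ![b,d,e] := by
  funext i; fin_cases i <;> rfl
lemma vec3_cons (a b d : A) : (![a,b,d] : Fin 3 → A) = Fin.cons a ![b,d] := by
  funext i; fin_cases i <;> rfl
lemma vec2_cons (a b : A) : (![a,b] : Fin 2 → A) = Fin.cons a ![b] := by
  funext i; fin_cases i <;> rfl

lemma mulFront2_tprod (a b d e : A) :
    mulFront k A 2 (PiTensorProduct.tprod k ![a,b,d,e])
      = PiTensorProduct.tprod k ![a*b, d, e] := by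
  rw [show (![a,b,d,e] : Fin 4 → A) = Fin.cons a (Fin.cons b ![d,e]) from by
      funext i; fin_cases i <;> rfl, mulFront_tprod]
  congr 1

lemma mulFront0_tprod (a b : A) :
    mulFront k A 0 (PiTensorProduct.tprod k ![a,b])
      = PiTensorProduct.tprod k ![a*b] := by
  rw [show (![a,b] : Fin 2 → A) = Fin.cons a (Fin.cons b ![]) from by
      funext i; fin_cases i <;> rfl, mulFront_tprod]
  congr 1

lemma reindex_perm_tprod (n : ℕ) (σ : Equiv.Perm (Fin n)) (f g : Fin n → A)
    (h : ∀ i, f (σ.symm i) = g i) :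
    PiTensorProduct.reindex k (fun _ => A) σ (PiTensorProduct.tprod k f)
      = PiTensorProduct.tprod k g := by
  rw [PiTensorProduct.reindex_tprod]
  congr 1
  funext i
  exact h i

lemma nface3_eval (j : Fin 3) (a b d e : A) :
    nface k A 3 j (PiTensorProduct.tprod k ![a,b,d,e])
      = ![PiTensorProduct.tprod k ![a*b,d,e], PiTensorProduct.tprod k ![a,b*d,e],
          PiTensorProduct.tprod k ![a,b,d*e]] j := by
  show ((PiTensorProduct.reindex k (fun _ => A) ((finRotate 3) ^ (j : ℕ))).toLinearMap ∘ₗ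
        (mulFront k A 2) ∘ₗ
          (PiTensorProduct.reindex k (fun _ => A)
            (((finRotate 4) ^ (j : ℕ))⁻¹)).toLinearMap) _ = _
  simp only [LinearMap.coe_comp, LinearEquiv.coe_coe, Function.comp_apply]
  fin_cases j
  · rw [reindex_perm_tprod k A _ _ _ ![a,b,d,e] (by intro i; fin_cases i <;> rfl),
      mulFront2_tprod,
      reindex_perm_tprod k A _ _ _ ![a*b,d,e] (by intro i; fin_cases i <;> rfl)]
    rfl
  · rw [reindex_perm_tprod k A _ _ _ ![b,d,e,a] (by intro i; fin_cases i <;> rfl),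
      mulFront2_tprod,
      reindex_perm_tprod k A _ _ _ ![a,b*d,e] (by intro i; fin_cases i <;> rfl)]
    rfl
  · rw [reindex_perm_tprod k A _ _ _ ![d,e,a,b] (by intro i; fin_cases i <;> rfl),
      mulFront2_tprod,
      reindex_perm_tprod k A _ _ _ ![a,b,d*e] (by intro i; fin_cases i <;> rfl)]
    rfl

lemma nface1_eval (a b : A) :
    nface k A 1 0 (PiTensorProduct.tprod k ![a,b]) = PiTensorProduct.tprod k ![a*b] := by
  show ((PiTensorProduct.reindex k (fun _ => A) ((finRotate 1) ^ ((0 : Fin 1) : ℕ))).toLinearMap ∘ₗ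
        (mulFront k A 0) ∘ₗ
          (PiTensorProduct.reindex k (fun _ => A)
            (((finRotate 2) ^ ((0 : Fin 1) : ℕ))⁻¹)).toLinearMap) _ = _
  simp only [LinearMap.coe_comp, LinearEquiv.coe_coe, Function.comp_apply]
  rw [reindex_perm_tprod k A _ _ _ ![a,b] (by intro i; fin_cases i <;> rfl),
    mulFront0_tprod,
    reindex_perm_tprod k A _ _ _ ![a*b] (by intro i; fin_cases i <;> rfl)]

lemma rotR2_eval (a b : A) :
    rotR k A 2 (PiTensorProduct.tprod k ![a,b]) = PiTensorProduct.tprod k ![b,a] := by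
  rw [rotR_tprod]; congr 1; funext i; fin_cases i <;> rfl

lemma rotR4_eval (a b d e : A) :
    rotR k A 4 (PiTensorProduct.tprod k ![a,b,d,e]) = PiTensorProduct.tprod k ![e,a,b,d] := by
  rw [rotR_tprod]; congr 1; funext i; fin_cases i <;> rfl

lemma hb0_eval (a b : A) :
    hb k A 0 (PiTensorProduct.tprod k ![a,b])
      = PiTensorProduct.tprod k ![a*b] - PiTensorProduct.tprod k ![b*a] := by
  simp only [hb, Nat.reduceAdd, LinearMap.add_apply, LinearMap.sum_apply, LinearMap.smul_apply,
    LinearMap.coe_comp, Function.comp_apply, LinearEquiv.coe_coe,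
    Fin.sum_univ_one, Fin.val_zero, pow_zero, pow_one, one_smul, neg_smul, rotR2_eval]
  rw [nface1_eval, mulFront0_tprod]
  abel

lemma hb2_eval (a b d e : A) :
    hb k A 2 (PiTensorProduct.tprod k ![a,b,d,e])
      = PiTensorProduct.tprod k ![a*b,d,e] - PiTensorProduct.tprod k ![a,b*d,e]
        + PiTensorProduct.tprod k ![a,b,d*e] - PiTensorProduct.tprod k ![e*a,b,d] := by
  simp only [hb, Nat.reduceAdd, LinearMap.add_apply, LinearMap.sum_apply, LinearMap.smul_apply,
    LinearMap.coe_comp, Function.comp_apply, LinearEquiv.coe_coe, Fin.sum_univ_three,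
    rotR4_eval, nface3_eval, mulFront2_tprod, Fin.isValue, Matrix.cons_val_zero,
    Matrix.cons_val_one, Matrix.head_cons, Matrix.cons_val_two, Matrix.tail_cons,
    Fin.val_zero, Fin.val_one, Fin.val_two, pow_zero, pow_one, one_smul, neg_smul]
  norm_num
  abel

lemma ins0_eval (n : ℕ) (f : Fin n → A) :
    ins0 k A n (PiTensorProduct.tprod k f) = PiTensorProduct.tprod k (Fin.cons 1 f) := by
  simp only [ins0, LinearMap.coe_comp, Function.comp_apply, LinearEquiv.coe_coe,
    TensorProduct.mk_apply, toFront_tmul]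

lemma ins1_eval (a b : A) :
    ins1 k A 1 (PiTensorProduct.tprod k ![a,b]) = PiTensorProduct.tprod k ![a,1,b] := by
  simp only [ins1, LinearMap.coe_comp, Function.comp_apply, LinearEquiv.coe_coe]
  rw [show (rotR k A 2).symm (PiTensorProduct.tprod k ![a,b])
      = PiTensorProduct.tprod k ![b,a] from by
    rw [LinearEquiv.symm_apply_eq, rotR2_eval]]
  rw [ins0_eval, show (Fin.cons 1 ![b,a] : Fin 3 → A) = ![1,b,a] from by
    funext i; fin_cases i <;> rfl]
  rw [rotR_tprod]; congr 1; funext i; fin_cases i <;> rfl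

lemma hB1_eval (a b : A) :
    hB k A 1 (PiTensorProduct.tprod k ![a,b])
      = PiTensorProduct.tprod k ![1,a,b] - PiTensorProduct.tprod k ![a,1,b]
        - PiTensorProduct.tprod k ![1,b,a] + PiTensorProduct.tprod k ![b,1,a] := by
  simp only [hB, Nat.reduceAdd, LinearMap.sum_apply, LinearMap.add_apply, LinearMap.smul_apply, LinearMap.coe_comp,
    Function.comp_apply, LinearEquiv.coe_coe, LinearMap.sub_apply, Fin.sum_univ_two,
    Fin.isValue, Fin.val_zero, Fin.val_one]
  rw [reindex_perm_tprod k A _ _ _ ![a,b] (by intro i; fin_cases i <;> rfl),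
    reindex_perm_tprod k A _ _ _ ![b,a] (by intro i; fin_cases i <;> rfl),
    ins0_eval, ins0_eval, ins1_eval, ins1_eval,
    show (Fin.cons 1 ![a,b] : Fin 3 → A) = ![1,a,b] from by funext i; fin_cases i <;> rfl,
    show (Fin.cons 1 ![b,a] : Fin 3 → A) = ![1,b,a] from by funext i; fin_cases i <;> rfl]
  norm_num
  abel


/-- Suppose `c ∈ Z(A) ∩ U(A)` and `h ∈ A*` satisfy
`α(a⊗b)(c) − α(b⊗a)(c) + h(ab − ba) = 0` for all `a, b`. Then, with
`h' := h − α(1⊗1)·c`, the pair `(i_c*(α̃), h')` is a cyclic 2-cocycle: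
`b₃*(i_c*(α̃)) = 0` and `B₁*(i_c*(α̃)) + b₁*(h') = 0`. -/
theorem cyclic_two_cocycle_lift
    (k : Type*) [Field k] (A : Type*) [Ring A] [Algebra k A] [FiniteDimensional k A]
    (α : A →ₗ[k] A →ₗ[k] Module.Dual k A)
    (hα : ∀ a b d x : A, α b d (x * a) - α (a * b) d x + α a (b * d) x - α a b (d * x) = 0)
    (c : A) (hc : ∀ a : A, a * c = c * a) (hcu : IsUnit c)
    (h : Module.Dual k A)
    (H : ∀ a b : A, α a b c - α b a c + h (a * b - b * a) = 0) :
    (adjCochain k A α ∘ₗ iC k A c 2) ∘ₗ hb k A 2 = 0 ∧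
    (adjCochain k A α ∘ₗ iC k A c 2) ∘ₗ hB k A 1
      + (((h - (α 1 1) ∘ₗ LinearMap.mulLeft k c) ∘ₗ (single k A).toLinearMap)
          ∘ₗ hb k A 0) = 0 := by
  constructor
  · refine PiTensorProduct.ext (MultilinearMap.ext fun f => ?_)
    simp only [LinearMap.compMultilinearMap_apply, LinearMap.coe_comp, Function.comp_apply,
      LinearMap.zero_comp, LinearMap.zero_apply]
    rw [show (PiTensorProduct.tprod k f) = PiTensorProduct.tprod k ![f 0, f 1, f 2, f 3] from by
      congr; funext i; fin_cases i <;> rfl]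
    rw [hb2_eval]
    simp only [map_sub, map_add, iC_tprod, adjCochain_tprod]
    have h1 := hα (f 1) (f 2) (f 3) (f 0 * c)
    have e1 : f 0 * c * f 1 = f 0 * f 1 * c := by
      rw [mul_assoc, ← hc (f 1), ← mul_assoc]
    have e2 : f 3 * (f 0 * c) = f 3 * f 0 * c := by rw [mul_assoc]
    rw [e1, e2] at h1
    linear_combination h1
  · refine PiTensorProduct.ext (MultilinearMap.ext fun f => ?_)
    simp only [LinearMap.compMultilinearMap_apply, LinearMap.add_apply, LinearMap.coe_comp,
      Function.comp_apply, LinearEquiv.coe_coe, LinearMap.zero_apply]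
    rw [show (PiTensorProduct.tprod k f) = PiTensorProduct.tprod k ![f 0, f 1] from by
      congr; funext i; fin_cases i <;> rfl]
    set a := f 0; set b := f 1
    rw [hb0_eval, hB1_eval]
    simp only [map_sub, map_add, iC_tprod, adjCochain_tprod, single_tprod,
      LinearMap.sub_apply, LinearMap.mulLeft_apply, Matrix.cons_val_zero]
    -- now a scalar identity in k
    have key : ∀ x y z : A, α 1 (x * y) z = α 1 x (y * z) := by
      intro x y z
      have := hα 1 x y z
      simpa [sub_eq_zero] using this
    have k1 : α 1 b (a * c) = α 1 1 (b * (a * c)) := by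
      have := key 1 b (a * c); simpa using this
    have k2 : α 1 a (b * c) = α 1 1 (a * (b * c)) := by
      have := key 1 a (b * c); simpa using this
    have hH := H a b
    have e1 : c * (a * b) = a * (b * c) := by
      rw [← hc (a * b), mul_assoc]
    have e2 : c * (b * a) = b * (a * c) := by
      rw [← hc (b * a), mul_assoc]
    rw [map_sub] at hH
    simp only [one_mul, LinearMap.coe_comp, Function.comp_apply, LinearMap.mulLeft_apply]
    rw [k1, k2, e1, e2]
    linear_combination hH

end HochschildScaffold
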